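/- Let X_1,...,X_n be i.i.d. integer-valued random variables taking values in {-1, 0, 1, 2, ...}, let W_j = X_1+...+X_j, and let A ⊆ ℤ^n be invariant under cyclic permutations of coordinates. Then P((X_1,...,X_n) ∈ A, W_n = -1, W_i ≥ 0 for all 1 ≤ i ≤ n-1) = (1/n) · P((X_1,...,X_n) ∈ A, W_n = -1). -/

import Mathlib

open MeasureTheory ProbabilityTheory Finset

section CycleAux

variable {n : ℕ}

/-- The "all strict partial sums nonnegative" predicate. -/
def GoodSeq (n : ℕ) (w : Fin n → ℤ) : Prop :=
  ∀ m : ℕ, 1 ≤ m → m ≤ n - 1 → 0 ≤ ∑ j : Fin n, if (j : ℕ) < m then w j else 0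

theorem cycle_lemma (hn : 0 < n) (v : Fin n → ℤ) (hsum : ∑ i, v i = -1) :
    ∃! i : Fin n, GoodSeq n (fun j => v (i + j)) := by
  classical
  set v' : ℕ → ℤ := fun k => v ⟨k % n, Nat.mod_lt _ hn⟩ with hv'
  set S : ℕ → ℤ := fun k => ∑ t ∈ Finset.range k, v' t with hSdef
  have hvv : ∀ i : Fin n, v' (i : ℕ) = v i := by
    intro i
    simp only [hv']
    congr 1
    exact Fin.ext (Nat.mod_eq_of_lt i.isLt)
  have hper : ∀ k, v' (k + n) = v' k := by
    intro k; simp only [hv', Nat.add_mod_right]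
  have hSn : S n = -1 := by
    rw [← hsum]
    calc S n = ∑ t ∈ Finset.range n, v' t := rfl
      _ = ∑ i : Fin n, v' (i : ℕ) := (Fin.sum_univ_eq_sum_range _ n).symm
      _ = ∑ i, v i := Finset.sum_congr rfl fun i _ => hvv i
  have hSper : ∀ k, S (k + n) = S k - 1 := by
    intro k
    induction k with
    | zero => simpa [hSdef] using hSn
    | succ k ih =>
        have h1 : k + 1 + n = (k + n) + 1 := by omega
        rw [h1]
        simp only [hSdef, Finset.sum_range_succ] at ih ⊢
        rw [hper k]
        omega
  -- partial sums of shifted sequence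
  have hps : ∀ (i m : ℕ) (hi : i < n), m ≤ n →
      (∑ j : Fin n, if (j : ℕ) < m then v (⟨i, hi⟩ + j) else 0) = S (i + m) - S i := by
    intro i m hi hm
    have e1 : ∀ j : Fin n, v (⟨i, hi⟩ + j) = v' (i + (j : ℕ)) := by
      intro j
      have hj : (⟨i, hi⟩ + j : Fin n) = ⟨(i + (j : ℕ)) % n, Nat.mod_lt _ hn⟩ :=
        Fin.ext (by simp [Fin.add_def])
      rw [hj]
    have e2 : (∑ j : Fin n, if (j : ℕ) < m then v (⟨i, hi⟩ + j) else 0)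
        = ∑ t ∈ Finset.range m, v' (i + t) := by
      calc (∑ j : Fin n, if (j : ℕ) < m then v (⟨i, hi⟩ + j) else 0)
          = ∑ j : Fin n, (if ((j : ℕ)) < m then v' (i + (j : ℕ)) else 0) := by
            refine Finset.sum_congr rfl fun j _ => ?_
            rw [e1]
        _ = ∑ t ∈ Finset.range n, (if t < m then v' (i + t) else 0) :=
            Fin.sum_univ_eq_sum_range (fun t => if t < m then v' (i + t) else 0) n
        _ = ∑ t ∈ (Finset.range n).filter (· < m), v' (i + t) :=
            (Finset.sum_filter _ _).symm
        _ = ∑ t ∈ Finset.range m, v' (i + t) := by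
            congr 1
            ext t
            simp only [Finset.mem_filter, Finset.mem_range]
            omega
    rw [e2]
    clear e2 e1
    induction m with
    | zero => simp
    | succ m ih =>
        have hm' : m ≤ n := by omega
        rw [Finset.sum_range_succ, ih hm']
        have : S (i + (m + 1)) = S (i + m) + v' (i + m) := by
          have h2 : i + (m + 1) = (i + m) + 1 := by omega
          rw [h2]; simp [hSdef, Finset.sum_range_succ]
        rw [this]; ring
  -- characterization of Good via S
  have hchar : ∀ (i : ℕ) (hi : i < n),
      GoodSeq n (fun j => v (⟨i, hi⟩ + j)) ↔ ∀ m, 1 ≤ m → m ≤ n - 1 → S i ≤ S (i + m) := by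
    intro i hi
    constructor <;> intro h m h1 h2
    · have := h m h1 h2
      rw [hps i m hi (by omega)] at this
      omega
    · have := h m h1 h2
      rw [hps i m hi (by omega)]
      omega
  -- from goodness derive argmin-first properties
  have hP : ∀ (i : ℕ), i < n → (∀ m, 1 ≤ m → m ≤ n - 1 → S i ≤ S (i + m)) →
      ∀ j < n, S i ≤ S j ∧ (j < i → S i < S j) := by
    intro i hi hg j hj
    rcases lt_trichotomy i j with hij | hij | hij
    · refine ⟨?_, fun h => absurd h (by omega)⟩
      have := hg (j - i) (by omega) (by omega)
      have hji : i + (j - i) = j := by omega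
      rwa [hji] at this
    · subst hij; exact ⟨le_refl _, fun h => absurd h (by omega)⟩
    · have h1 : 1 ≤ n + j - i := by omega
      have h2 : n + j - i ≤ n - 1 := by omega
      have := hg (n + j - i) h1 h2
      have hji : i + (n + j - i) = j + n := by omega
      rw [hji, hSper j] at this
      constructor
      · omega
      · intro _; omega
  -- existence of first argmin
  have hex : ∃ k, k < n ∧ ∀ j < n, S k ≤ S j := by
    obtain ⟨k, hk, hmin⟩ := Finset.exists_min_image (Finset.range n) S
      ⟨0, Finset.mem_range.2 hn⟩
    exact ⟨k, Finset.mem_range.1 hk, fun j hj => hmin j (Finset.mem_range.2 hj)⟩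
  set i₀ := Nat.find hex with hi₀def
  obtain ⟨hi₀lt, hi₀min⟩ := Nat.find_spec hex
  have hfirst : ∀ k < i₀, S i₀ < S k := by
    intro k hk
    have hkn : k < n := by omega
    have := Nat.find_min hex hk
    push_neg at this
    obtain ⟨j, hj, hjlt⟩ := this hkn
    exact lt_of_le_of_lt (hi₀min j hj) hjlt
  -- i₀ is good
  have hgood₀ : ∀ m, 1 ≤ m → m ≤ n - 1 → S i₀ ≤ S (i₀ + m) := by
    intro m h1 h2
    by_cases hc : i₀ + m < n
    · exact hi₀min _ hc
    · have hr : i₀ + m = (i₀ + m - n) + n := by omega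
      rw [hr, hSper]
      have hrlt : i₀ + m - n < i₀ := by omega
      have := hfirst _ hrlt
      omega
  refine ⟨⟨i₀, hi₀lt⟩, (hchar i₀ hi₀lt).2 hgood₀, ?_⟩
  rintro ⟨i, hi⟩ hgi
  have hgi' := (hchar i hi).1 hgi
  have hPi := hP i hi hgi'
  have hPi₀ := hP i₀ hi₀lt hgood₀
  have := hPi i₀ hi₀lt
  have := hPi₀ i hi
  refine Fin.ext ?_
  show i = i₀
  by_contra hne
  rcases lt_or_gt_of_ne hne with h | h
  · have h1 := (hPi₀ i hi).2 h
    have h2 := (hPi i₀ hi₀lt).1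
    omega
  · have h1 := (hPi i₀ hi₀lt).2 h
    have h2 := (hPi₀ i hi).1
    omega

end CycleAux

/-- Probabilistic cycle lemma: if `X_1,...,X_n` are i.i.d. integer random variables with
values in `{-1,0,1,...}`, `W_m` their partial sums, and `A ⊆ ℤ^n` is invariant under cyclic
permutation of coordinates, then
`P((X_i) ∈ A, W_n = -1, W_m ≥ 0 ∀ 1 ≤ m ≤ n-1) = (1/n) P((X_i) ∈ A, W_n = -1)`. -/
theorem stmt_3 {Ω : Type*} [MeasurableSpace Ω] (μ : Measure Ω) [IsProbabilityMeasure μ]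
    (n : ℕ) (hn : 0 < n) (X : Fin n → Ω → ℤ)
    (hmeas : ∀ i, Measurable (X i))
    (hindep : iIndepFun X μ)
    (hident : ∀ i j, MeasureTheory.Measure.map (X i) μ = MeasureTheory.Measure.map (X j) μ)
    (hval : ∀ i ω, -1 ≤ X i ω)
    (A : Set (Fin n → ℤ))
    (hA : ∀ v ∈ A, ∀ i : Fin n, (fun j => v (i + j)) ∈ A) :
    μ {ω | (fun i => X i ω) ∈ A ∧ (∑ i : Fin n, X i ω) = -1 ∧
        ∀ m : ℕ, 1 ≤ m → m ≤ n - 1 →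
          0 ≤ ∑ j : Fin n, if (j : ℕ) < m then X j ω else 0}
      = (n : ENNReal)⁻¹ * μ {ω | (fun i => X i ω) ∈ A ∧ (∑ i : Fin n, X i ω) = -1} := by
  classical
  haveI : NeZero n := ⟨hn.ne'⟩
  set m₀ : Measure ℤ := μ.map (X 0) with hm₀
  haveI : IsProbabilityMeasure m₀ := Measure.isProbabilityMeasure_map (hmeas 0).aemeasurable
  set T : Ω → (Fin n → ℤ) := fun ω i => X i ω with hT
  have hTmeas : Measurable T := measurable_pi_lambda _ hmeas
  set ν : Measure (Fin n → ℤ) := μ.map T with hν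
  have hmeasAll : ∀ s : Set (Fin n → ℤ), MeasurableSet s := fun s =>
    s.to_countable.measurableSet
  -- the joint law is the product of the (identical) marginals
  have hνpi : ν = Measure.pi (fun _ : Fin n => m₀) := by
    symm
    refine Measure.pi_eq fun s hs => ?_
    rw [hν, Measure.map_apply hTmeas (hmeasAll _)]
    have hpre : T ⁻¹' (Set.pi Set.univ s) = ⋂ i ∈ Finset.univ, X i ⁻¹' s i := by
      ext ω; simp [hT, Set.mem_pi]
    rw [hpre, hindep.measure_inter_preimage_eq_mul Finset.univ (fun i _ => hs i)]
    refine Finset.prod_congr rfl fun i _ => ?_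
    rw [hm₀, hident 0 i, Measure.map_apply (hmeas i) (hs i)]
  -- the cyclic shifts
  set σ : Fin n → (Fin n → ℤ) → (Fin n → ℤ) := fun i v j => v (i + j) with hσ
  have hσmeas : ∀ i, Measurable (σ i) := fun i =>
    measurable_pi_lambda _ fun j => measurable_pi_apply _
  have hshift : ∀ i : Fin n, ν.map (σ i) = ν := by
    intro i
    rw [hνpi]
    have h := measurePreserving_arrowCongr' (fun _ : Fin n => m₀) (fun _ : Fin n => m₀)
      (Equiv.addLeft i).symm (MeasurableEquiv.refl ℤ)
      (fun _ => MeasurePreserving.id m₀)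
    have hc : ⇑(MeasurableEquiv.arrowCongr' (Equiv.addLeft i).symm (MeasurableEquiv.refl ℤ))
        = σ i := by
      funext v j
      simp [MeasurableEquiv.arrowCongr', Equiv.arrowCongr', Equiv.arrowCongr, hσ, Equiv.addLeft]
    rw [← hc]
    exact h.map_eq
  -- the events
  set B : Set (Fin n → ℤ) := {v | v ∈ A ∧ (∑ j, v j) = -1 ∧ GoodSeq n v} with hB
  set C : Set (Fin n → ℤ) := {v | v ∈ A ∧ (∑ j, v j) = -1} with hC
  -- shifts preserve A and the total sum
  have hsum_shift : ∀ (i : Fin n) (v : Fin n → ℤ), (∑ j, σ i v j) = ∑ j, v j := by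
    intro i v
    exact Equiv.sum_comp (Equiv.addLeft i) v
  have hmemC : ∀ (i : Fin n) (v : Fin n → ℤ), σ i v ∈ B → v ∈ C := by
    intro i v hvB
    obtain ⟨hvA, hvs, -⟩ := hvB
    constructor
    · have := hA _ hvA (-i)
      have he : (fun j => σ i v (-i + j)) = v := by
        funext j
        show v (i + (-i + j)) = v j
        rw [add_neg_cancel_left]
      rwa [he] at this
    · rw [← hsum_shift i v]; exact hvs
  -- decomposition of C via the cycle lemma
  have hCeq : C = ⋃ i : Fin n, σ i ⁻¹' B := by
    ext v
    constructor
    · rintro ⟨hvA, hvs⟩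
      obtain ⟨i, hi, -⟩ := cycle_lemma hn v hvs
      exact Set.mem_iUnion.2 ⟨i, hA _ hvA i, by rw [hσ]; simp only; rw [hsum_shift i v]; exact hvs, hi⟩
    · intro hv
      obtain ⟨i, hi⟩ := Set.mem_iUnion.1 hv
      exact hmemC i v hi
  have hdisj : Pairwise (Function.onFun Disjoint fun i => σ i ⁻¹' B) := by
    intro i j hij
    rw [Function.onFun, Set.disjoint_left]
    intro v hvi hvj
    have hvC : v ∈ C := hmemC i v hvi
    obtain ⟨k, -, hk⟩ := cycle_lemma hn v hvC.2
    exact hij ((hk i hvi.2.2).trans (hk j hvj.2.2).symm)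
  -- measure computation
  have hterm : ∀ i, ν (σ i ⁻¹' B) = ν B := by
    intro i
    rw [← Measure.map_apply (hσmeas i) (hmeasAll _), hshift i]
  have hCcount : ν C = (n : ENNReal) * ν B := by
    rw [hCeq, measure_iUnion hdisj (fun i => hmeasAll _), tsum_fintype]
    simp only [hterm]
    simp [Finset.card_univ, mul_comm]
  -- conclude
  have hE1 : μ {ω | (fun i => X i ω) ∈ A ∧ (∑ i : Fin n, X i ω) = -1 ∧
        ∀ m : ℕ, 1 ≤ m → m ≤ n - 1 →
          0 ≤ ∑ j : Fin n, if (j : ℕ) < m then X j ω else 0} = ν B := by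
    rw [hν, Measure.map_apply hTmeas (hmeasAll B)]
    rfl
  have hE2 : μ {ω | (fun i => X i ω) ∈ A ∧ (∑ i : Fin n, X i ω) = -1} = ν C := by
    rw [hν, Measure.map_apply hTmeas (hmeasAll C)]
    rfl
  rw [hE1, hE2, hCcount, ← mul_assoc, ENNReal.inv_mul_cancel
    (by exact_mod_cast hn.ne') (ENNReal.natCast_ne_top n), one_mul]
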